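/- Let X = (X^1,…,X^N) be N i.i.d. samples from a probability measure η, m(X) = (1/N)∑δ_{X^i} the empirical measure, and Q a bounded positive integral operator with Q(1) > 0 such that log(Q(1)(x)/Q(1)(y)) ≤ q for all x,y. Then for any bounded measurable f: N·|E[φ(m(X))(f)] − φ(η)(f)| ≤ e^q · osc(Q̄(f)), where φ(μ) = μQ/μQ(1) and Q̄(f) = Q(f)/Q(1). -/

import Mathlib

open MeasureTheory

variable {S : Type*} [MeasurableSpace S]

/-- `Q(f)(x) = ∫ Q(x,dy) f(y)`. -/
noncomputable def opQ (Q : S → Measure S) (f : S → ℝ) (x : S) : ℝ := ∫ y, f y ∂(Q x)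

/-- `ηQ(f) = ∫ η(dx) Q(f)(x)`. -/
noncomputable def measQ (Q : S → Measure S) (η : Measure S) (f : S → ℝ) : ℝ :=
  ∫ x, opQ Q f x ∂η

/-- `φ(η)(f) = ηQ(f)/ηQ(1)`. -/
noncomputable def phiQ (Q : S → Measure S) (η : Measure S) (f : S → ℝ) : ℝ :=
  measQ Q η f / measQ Q η (fun _ => (1 : ℝ))

/-- The first order operator `∂_ηφ(f) = Q^η[f − φ(η)(f)]`, where
`Q^η := Q/(ηQ(1))`. -/
noncomputable def dphiQ (Q : S → Measure S) (η : Measure S) (f : S → ℝ) (x : S) : ℝ :=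
  (opQ Q f x - phiQ Q η f * opQ Q (fun _ => (1 : ℝ)) x) / measQ Q η (fun _ => (1 : ℝ))

/-- Normalized operator `Q̄(f) := Q(f)/Q(1)`. -/
noncomputable def nbarQ (Q : S → Measure S) (f : S → ℝ) (x : S) : ℝ :=
  opQ Q f x / opQ Q (fun _ => (1 : ℝ)) x

open ProbabilityTheory

private lemma aux_osc {E a b : ℝ} (ha : 0 < a) (hb : 0 < b)
    (hab : a ≤ E * b) (hba : b ≤ E * a) : |a - b| ≤ (E - 1) * a := by
  have hE : 1 ≤ E := by nlinarith
  rw [abs_le]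
  constructor
  · nlinarith
  · nlinarith [mul_nonneg (mul_nonneg (sub_nonneg.2 hE) (sub_nonneg.2 hE)) ha.le]

private lemma aux_ineq {E w y t o : ℝ} (n : ℕ) (hn : 2 ≤ n)
    (hy : 0 < y) (ht : 0 < t) (ho : 0 ≤ o) (hE : 1 ≤ E)
    (hwo : |w| ≤ o * y) (htE : |t - ((n : ℝ) - 1) * y| ≤ (E - 1) * t) :
    |w / (t + y) - w * (((n : ℝ) - 1) / ((n : ℝ) * t))|
      ≤ (E - 1) * o / (n : ℝ) * (y / (t + y)) := by
  have hn0 : (0:ℝ) < (n : ℝ) := by positivity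
  have hty : 0 < t + y := by linarith
  have key : w / (t + y) - w * (((n : ℝ) - 1) / ((n : ℝ) * t))
      = w * (t - ((n : ℝ) - 1) * y) / ((n : ℝ) * t * (t + y)) := by
    field_simp
    ring
  rw [key, abs_div, abs_mul, abs_of_pos (show (0:ℝ) < (n:ℝ) * t * (t + y) by positivity),
    div_le_iff₀ (show (0:ℝ) < (n:ℝ) * t * (t + y) by positivity)]
  have h1 : |w| * |t - ((n:ℝ)-1) * y| ≤ (o * y) * ((E-1) * t) :=
    mul_le_mul hwo htE (abs_nonneg _) (by positivity)
  have h2 : (E - 1) * o / (n:ℝ) * (y / (t + y)) * ((n:ℝ) * t * (t + y)) = (o * y) * ((E-1) * t) := by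
    field_simp
  linarith

/-- Bias estimate for the empirical measure transformation: if
`log(Q(1)(x)/Q(1)(y)) ≤ q` for all `x, y`, then for `N` i.i.d. samples
`X = (X^1,…,X^N)` from `η`,
`N·|E[φ(m(X))(f)] − φ(η)(f)| ≤ e^q · osc(Q̄(f))`.  Here
`φ(m(X))(f) = (∑_i Q(f)(X^i)) / (∑_i Q(1)(X^i))`. -/
theorem empirical_bias_estimate
    {Ω : Type*} [MeasurableSpace Ω] (P : Measure Ω) [IsProbabilityMeasure P]
    (Q : S → Measure S) (η : Measure S) [IsProbabilityMeasure η]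
    (N : ℕ) (hN : 1 ≤ N) (X : Fin N → Ω → S)
    (hXmeas : ∀ i, Measurable (X i))
    (hindep : iIndepFun X P)
    (hlaw : ∀ i, Measure.map (X i) P = η)
    (f : S → ℝ) (q o : ℝ)
    (hQ1pos : ∀ x, 0 < opQ Q (fun _ => (1 : ℝ)) x)
    (hη : 0 < measQ Q η (fun _ => (1 : ℝ)))
    (hfη : Integrable (opQ Q f) η) (h1η : Integrable (opQ Q (fun _ => (1 : ℝ))) η)
    (hq : ∀ x y, Real.log (opQ Q (fun _ => (1 : ℝ)) x / opQ Q (fun _ => (1 : ℝ)) y) ≤ q)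
    (ho : ∀ x y, |nbarQ Q f x - nbarQ Q f y| ≤ o)
    (hIexp : Integrable (fun ω =>
      (∑ i, opQ Q f (X i ω)) / (∑ i, opQ Q (fun _ => (1 : ℝ)) (X i ω))) P) :
    (N : ℝ) * |(∫ ω, (∑ i, opQ Q f (X i ω)) / (∑ i, opQ Q (fun _ => (1 : ℝ)) (X i ω)) ∂P)
        - phiQ Q η f| ≤ Real.exp q * o := by
  classical
  have hSne : Nonempty S := Measure.nonempty_of_neZero η
  obtain ⟨x₀⟩ := hSne
  set h : S → ℝ := opQ Q (fun _ => (1 : ℝ)) with hhdef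
  set g : S → ℝ := opQ Q f with hgdef
  set m : ℝ := measQ Q η (fun _ => (1 : ℝ)) with hmdef
  set c : ℝ := phiQ Q η f with hcdef
  set E : ℝ := Real.exp q with hEdef
  -- basic facts
  have hq0 : 0 ≤ q := by
    have := hq x₀ x₀
    rwa [div_self (hQ1pos x₀).ne', Real.log_one] at this
  have hE1 : (1 : ℝ) ≤ E := by
    rw [hEdef, show (1:ℝ) = Real.exp 0 by simp]
    exact Real.exp_le_exp.mpr hq0
  have hE0 : (0 : ℝ) < E := lt_of_lt_of_le one_pos hE1
  have hRatio : ∀ x y : S, h x ≤ E * h y := by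
    intro x y
    have hd : 0 < h x / h y := div_pos (hQ1pos x) (hQ1pos y)
    have := (Real.log_le_iff_le_exp hd).mp (hq x y)
    rw [div_le_iff₀ (hQ1pos y)] at this
    rw [hEdef]; linarith [this]
  have hmη : m = ∫ x, h x ∂η := rfl
  have hgη : measQ Q η f = ∫ x, g x ∂η := rfl
  have hub : ∀ x, h x ≤ E * m := by
    intro x
    have h1 : ∫ (_ : S), h x ∂η ≤ ∫ y, E * h y ∂η :=
      integral_mono (integrable_const _) (h1η.const_mul E) (fun y => hRatio x y)
    rwa [integral_const, probReal_univ, one_smul, integral_const_mul,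
      ← hmη] at h1
  have hlb : ∀ x, m ≤ E * h x := by
    intro x
    have h1 : ∫ y, h y ∂η ≤ ∫ (_ : S), E * h x ∂η :=
      integral_mono h1η (integrable_const _) (fun y => hRatio y x)
    rwa [integral_const, probReal_univ, one_smul, ← hmη] at h1
  have ho0 : 0 ≤ o := le_trans (abs_nonneg _) (ho x₀ x₀)
  have hgF : ∀ x, g x = h x * nbarQ Q f x := by
    intro x
    rw [nbarQ, ← hhdef, ← hgdef, mul_div_cancel₀ _ (hQ1pos x).ne']
  have hcm : c * m = ∫ y, g y ∂η := by
    rw [hcdef, phiQ, ← hmdef, div_mul_cancel₀ _ hη.ne']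
    rfl
  -- |F x - c| ≤ o
  have hFc : ∀ x, |nbarQ Q f x - c| ≤ o := by
    intro x
    have hint : Integrable (fun y => nbarQ Q f x * h y - g y) η :=
      (h1η.const_mul _).sub hfη
    have hval : ∫ y, (nbarQ Q f x * h y - g y) ∂η = (nbarQ Q f x - c) * m := by
      rw [integral_sub (h1η.const_mul _) hfη, integral_const_mul, ← hmη, ← hcm]
      ring
    have hbd : |∫ y, (nbarQ Q f x * h y - g y) ∂η| ≤ o * m := by
      calc |∫ y, (nbarQ Q f x * h y - g y) ∂η| ≤ ∫ y, |nbarQ Q f x * h y - g y| ∂η := by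
            simpa [Real.norm_eq_abs] using norm_integral_le_integral_norm
              (fun y => nbarQ Q f x * h y - g y) (μ := η)
        _ ≤ ∫ y, o * h y ∂η := by
            refine integral_mono hint.abs (h1η.const_mul o) (fun y => ?_)
            have hrw : nbarQ Q f x * h y - g y = h y * (nbarQ Q f x - nbarQ Q f y) := by
              rw [hgF y]; ring
            rw [hrw, abs_mul, abs_of_pos (hQ1pos y), mul_comm o (h y)]
            exact mul_le_mul_of_nonneg_left (ho x y) (hQ1pos y).le
        _ = o * m := by rw [integral_const_mul, ← hmη]
    rw [hval, abs_mul, abs_of_pos hη] at hbd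
    exact le_of_mul_le_mul_right hbd hη
  -- pointwise bound on the numerator terms
  have hWb : ∀ x : S, |g x - c * h x| ≤ o * h x := by
    intro x
    have hrw : g x - c * h x = h x * (nbarQ Q f x - c) := by rw [hgF x]; ring
    rw [hrw, abs_mul, abs_of_pos (hQ1pos x), mul_comm (o) (h x)]
    exact mul_le_mul_of_nonneg_left (hFc x) (hQ1pos x).le
  have hu0 : ∫ x, (g x - c * h x) ∂η = 0 := by
    rw [integral_sub hfη (h1η.const_mul c), integral_const_mul, ← hmη, ← hcm]
    ring
  -- composition helpers
  have hcomp : ∀ (ψ : S → ℝ), AEStronglyMeasurable ψ η →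
      ∀ i, AEStronglyMeasurable (fun ω => ψ (X i ω)) P := by
    intro ψ hψ i
    have h1 : AEStronglyMeasurable ψ (Measure.map (X i) P) := by rw [hlaw i]; exact hψ
    exact h1.comp_aemeasurable (hXmeas i).aemeasurable
  have haecomp : ∀ (ψ ψ' : S → ℝ), ψ =ᵐ[η] ψ' →
      ∀ i, (fun ω => ψ (X i ω)) =ᵐ[P] (fun ω => ψ' (X i ω)) := by
    intro ψ ψ' hψ i
    have h1 : ψ =ᵐ[Measure.map (X i) P] ψ' := by rw [hlaw i]; exact hψ
    exact MeasureTheory.ae_eq_comp (hXmeas i).aemeasurable h1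
  have hNE : (Finset.univ : Finset (Fin N)).Nonempty := by
    have : Nonempty (Fin N) := Fin.pos_iff_nonempty.mp (by omega)
    exact Finset.univ_nonempty
  have hShpos : ∀ ω, 0 < ∑ j, h (X j ω) :=
    fun ω => Finset.sum_pos (fun j _ => hQ1pos _) hNE
  have hYa : ∀ i, AEStronglyMeasurable (fun ω => h (X i ω)) P := hcomp h h1η.1
  have hZa : ∀ i, AEStronglyMeasurable (fun ω => g (X i ω)) P := hcomp g hfη.1
  have hSa : AEStronglyMeasurable (fun ω => ∑ j, h (X j ω)) P :=
    Finset.aestronglyMeasurable_fun_sum Finset.univ (fun i _ => hYa i)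
  have hWa : ∀ i, AEStronglyMeasurable (fun ω => g (X i ω) - c * h (X i ω)) P :=
    fun i => (hZa i).sub ((hYa i).const_mul c)
  have hdiv : ∀ (u v : Ω → ℝ), AEStronglyMeasurable u P → AEStronglyMeasurable v P →
      AEStronglyMeasurable (fun ω => u ω / v ω) P :=
    fun u v hu hv => (hu.aemeasurable.div hv.aemeasurable).aestronglyMeasurable
  have hWSa : ∀ i, AEStronglyMeasurable
      (fun ω => (g (X i ω) - c * h (X i ω)) / ∑ j, h (X j ω)) P :=
    fun i => hdiv _ _ (hWa i) hSa
  have hYdivSh : ∀ i ω, h (X i ω) / (∑ j, h (X j ω)) ≤ 1 := by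
    intro i ω
    rw [div_le_one (hShpos ω)]
    exact Finset.single_le_sum (f := fun j => h (X j ω))
      (fun j _ => (hQ1pos _).le) (Finset.mem_univ i)
  have hYdivnn : ∀ i ω, 0 ≤ h (X i ω) / (∑ j, h (X j ω)) :=
    fun i ω => div_nonneg (hQ1pos _).le (hShpos ω).le
  have hWS_bound : ∀ i ω, |(g (X i ω) - c * h (X i ω)) / ∑ j, h (X j ω)|
      ≤ o * (h (X i ω) / ∑ j, h (X j ω)) := by
    intro i ω
    rw [abs_div, abs_of_pos (hShpos ω), ← mul_div_assoc]
    exact (div_le_div_iff_of_pos_right (hShpos ω)).mpr (hWb _)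
  have hWS_int : ∀ i, Integrable
      (fun ω => (g (X i ω) - c * h (X i ω)) / ∑ j, h (X j ω)) P := by
    intro i
    refine Integrable.mono' (integrable_const o) (hWSa i)
      (Filter.Eventually.of_forall fun ω => ?_)
    rw [Real.norm_eq_abs]
    refine le_trans (hWS_bound i ω) ?_
    nlinarith [hYdivSh i ω, hYdivnn i ω]
  have hYS_int : ∀ i, Integrable (fun ω => h (X i ω) / ∑ j, h (X j ω)) P := by
    intro i
    refine Integrable.mono' (integrable_const 1) (hdiv _ _ (hYa i) hSa)
      (Filter.Eventually.of_forall fun ω => ?_)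
    rw [Real.norm_eq_abs, abs_of_nonneg (hYdivnn i ω)]
    exact hYdivSh i ω
  have hone : ∑ i, ∫ ω, h (X i ω) / (∑ j, h (X j ω)) ∂P = 1 := by
    rw [← integral_finset_sum Finset.univ (fun i _ => hYS_int i)]
    have hpt : ∀ ω, ∑ i, h (X i ω) / (∑ j, h (X j ω)) = 1 := by
      intro ω
      rw [← Finset.sum_div]
      exact div_self (hShpos ω).ne'
    rw [integral_congr_ae (Filter.Eventually.of_forall hpt)]
    simp
  have hsum : (∫ ω, (∑ i, g (X i ω)) / (∑ j, h (X j ω)) ∂P) - c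
      = ∑ i, ∫ ω, (g (X i ω) - c * h (X i ω)) / (∑ j, h (X j ω)) ∂P := by
    rw [← integral_finset_sum Finset.univ (fun i _ => hWS_int i)]
    have hptw : ∀ ω, (∑ i, g (X i ω)) / (∑ j, h (X j ω)) - c
        = ∑ i, (g (X i ω) - c * h (X i ω)) / (∑ j, h (X j ω)) := by
      intro ω
      rw [← Finset.sum_div]
      have hnum : ∑ i, (g (X i ω) - c * h (X i ω))
          = (∑ i, g (X i ω)) - c * ∑ j, h (X j ω) := by
        rw [Finset.mul_sum, Finset.sum_sub_distrib]
      rw [hnum, sub_div, mul_div_assoc, div_self (hShpos ω).ne', mul_one]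
    calc (∫ ω, (∑ i, g (X i ω)) / (∑ j, h (X j ω)) ∂P) - c
        = ∫ ω, ((∑ i, g (X i ω)) / (∑ j, h (X j ω)) - c) ∂P := by
          rw [integral_sub hIexp (integrable_const c), integral_const]
          simp
      _ = ∫ ω, ∑ i, (g (X i ω) - c * h (X i ω)) / (∑ j, h (X j ω)) ∂P :=
          integral_congr_ae (Filter.Eventually.of_forall hptw)
  set C : ℝ := if 2 ≤ N then (E - 1) * o / N else o with hCdef
  have key : ∀ i : Fin N, |∫ ω, (g (X i ω) - c * h (X i ω)) / (∑ j, h (X j ω)) ∂P|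
      ≤ C * ∫ ω, h (X i ω) / (∑ j, h (X j ω)) ∂P := by
    intro i
    by_cases h2 : 2 ≤ N
    · -- main case : N ≥ 2
      rw [hCdef, if_pos h2]
      have hN1 : (0:ℝ) < (N : ℝ) - 1 := by
        have : (2:ℝ) ≤ (N:ℝ) := by exact_mod_cast h2
        linarith
      have hcard : ((Finset.univ.erase i).card : ℝ) = (N : ℝ) - 1 := by
        rw [Finset.card_erase_of_mem (Finset.mem_univ i), Finset.card_univ, Fintype.card_fin]
        have h1N : 1 ≤ N := hN
        push_cast [Nat.cast_sub h1N]
        ring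
      haveI : Nontrivial (Fin N) := Fin.nontrivial_iff_two_le.mpr h2
      have hTpos : ∀ ω, 0 < ∑ j ∈ Finset.univ.erase i, h (X j ω) := by
        intro ω
        refine Finset.sum_pos (fun j _ => hQ1pos _) ?_
        obtain ⟨j, hji⟩ := exists_ne i
        exact ⟨j, Finset.mem_erase.mpr ⟨hji, Finset.mem_univ j⟩⟩
      have hShsplit : ∀ ω, ∑ j, h (X j ω)
          = (∑ j ∈ Finset.univ.erase i, h (X j ω)) + h (X i ω) := by
        intro ω
        rw [Finset.sum_erase_add _ _ (Finset.mem_univ i)]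
      have htE : ∀ ω, |(∑ j ∈ Finset.univ.erase i, h (X j ω)) - ((N:ℝ) - 1) * h (X i ω)|
          ≤ (E - 1) * ∑ j ∈ Finset.univ.erase i, h (X j ω) := by
        intro ω
        have hrw : (∑ j ∈ Finset.univ.erase i, h (X j ω)) - ((N:ℝ) - 1) * h (X i ω)
            = ∑ j ∈ Finset.univ.erase i, (h (X j ω) - h (X i ω)) := by
          rw [Finset.sum_sub_distrib, Finset.sum_const, nsmul_eq_mul, hcard]
        rw [hrw]
        calc |∑ j ∈ Finset.univ.erase i, (h (X j ω) - h (X i ω))|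
            ≤ ∑ j ∈ Finset.univ.erase i, |h (X j ω) - h (X i ω)| :=
              Finset.abs_sum_le_sum_abs _ _
          _ ≤ ∑ j ∈ Finset.univ.erase i, (E - 1) * h (X j ω) :=
              Finset.sum_le_sum (fun j _ =>
                aux_osc (hQ1pos _) (hQ1pos _) (hRatio _ _) (hRatio _ _))
          _ = (E - 1) * ∑ j ∈ Finset.univ.erase i, h (X j ω) := by
              rw [Finset.mul_sum]
      have hptw : ∀ ω, |(g (X i ω) - c * h (X i ω)) / (∑ j, h (X j ω))
            - (g (X i ω) - c * h (X i ω))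
              * (((N:ℝ)-1)/((N:ℝ) * ∑ j ∈ Finset.univ.erase i, h (X j ω)))|
          ≤ (E - 1) * o / (N:ℝ) * (h (X i ω) / ∑ j, h (X j ω)) := by
        intro ω
        rw [hShsplit ω]
        exact aux_ineq N h2 (hQ1pos _) (hTpos ω) ho0 hE1 (hWb _) (htE ω)
      -- measurable representatives
      have hu_int : Integrable (fun x => g x - c * h x) η := hfη.sub (h1η.const_mul c)
      obtain ⟨u', hu'meas, hu'ae⟩ :
          ∃ u' : S → ℝ, Measurable u' ∧ (fun x => g x - c * h x) =ᵐ[η] u' :=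
        ⟨hu_int.1.mk _, hu_int.1.stronglyMeasurable_mk.measurable, hu_int.1.ae_eq_mk⟩
      obtain ⟨h', hh'meas, hh'ae⟩ : ∃ h' : S → ℝ, Measurable h' ∧ h =ᵐ[η] h' :=
        ⟨h1η.1.mk _, h1η.1.stronglyMeasurable_mk.measurable, h1η.1.ae_eq_mk⟩
      -- independence
      have hdisj : Disjoint (Finset.univ.erase i) ({i} : Finset (Fin N)) := by simp
      have hIF := hindep.indepFun_finset (Finset.univ.erase i) {i} hdisj hXmeas
      set φ : (↥(Finset.univ.erase i) → S) → ℝ :=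
        fun v => ((N:ℝ)-1)/((N:ℝ) * ∑ j : ↥(Finset.univ.erase i), h' (v j))
        with hφdef
      have hφmeas : Measurable φ := by
        apply Measurable.div measurable_const
        exact Measurable.mul measurable_const
          (Finset.measurable_sum Finset.univ (fun j _ => hh'meas.comp (measurable_pi_apply j)))
      set ψ : (↥({i} : Finset (Fin N)) → S) → ℝ :=
        fun v => u' (v ⟨i, Finset.mem_singleton_self i⟩) with hψdef
      have hψmeas : Measurable ψ := hu'meas.comp (measurable_pi_apply _)
      have hcomp2 := hIF.comp hφmeas hψmeas
      have hVeq : (φ ∘ fun a (j : ↥(Finset.univ.erase i)) => X (↑j) a)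
          = fun ω => ((N:ℝ)-1)/((N:ℝ) * ∑ j ∈ Finset.univ.erase i, h' (X j ω)) := by
        funext ω
        simp only [Function.comp_apply, hφdef]
        congr 2
        exact Finset.sum_coe_sort _ (fun j => h' (X j ω))
      have hUeq : (ψ ∘ fun a (j : ↥({i} : Finset (Fin N))) => X (↑j) a)
          = fun ω => u' (X i ω) := rfl
      rw [hVeq, hUeq] at hcomp2
      -- a.e. identifications
      have hU'W : (fun ω => g (X i ω) - c * h (X i ω)) =ᵐ[P] (fun ω => u' (X i ω)) :=
        haecomp _ _ hu'ae i
      have hTae : (fun ω => ∑ j ∈ Finset.univ.erase i, h (X j ω))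
          =ᵐ[P] (fun ω => ∑ j ∈ Finset.univ.erase i, h' (X j ω)) := by
        have hall : ∀ᵐ ω ∂P, ∀ j ∈ Finset.univ.erase i, h (X j ω) = h' (X j ω) :=
          (ae_ball_iff (Finset.univ.erase i).countable_toSet).mpr
            (fun j _ => haecomp _ _ hh'ae j)
        filter_upwards [hall] with ω hω
        exact Finset.sum_congr rfl hω
      have hVae : (fun ω => ((N:ℝ)-1)/((N:ℝ) * ∑ j ∈ Finset.univ.erase i, h (X j ω)))
          =ᵐ[P] (fun ω => ((N:ℝ)-1)/((N:ℝ) * ∑ j ∈ Finset.univ.erase i, h' (X j ω))) := by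
        filter_upwards [hTae] with ω hω
        rw [hω]
      -- integrability
      have hTlb : ∀ ω, ((N:ℝ)-1) * (m / E) ≤ ∑ j ∈ Finset.univ.erase i, h (X j ω) := by
        intro ω
        have hb : ∀ j ∈ Finset.univ.erase i, m / E ≤ h (X j ω) := by
          intro j _
          rw [div_le_iff₀ hE0]
          nlinarith [hlb (X j ω)]
        have := Finset.card_nsmul_le_sum (Finset.univ.erase i) (fun j => h (X j ω)) (m/E) hb
        rwa [nsmul_eq_mul, hcard] at this
      have hTlbpos : (0:ℝ) < ((N:ℝ)-1) * (m / E) := by positivity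
      have hW_int : Integrable (fun ω => g (X i ω) - c * h (X i ω)) P := by
        refine Integrable.mono' (integrable_const (o * (E * m))) (hWa i)
          (Filter.Eventually.of_forall fun ω => ?_)
        rw [Real.norm_eq_abs]
        exact le_trans (hWb _) (mul_le_mul_of_nonneg_left (hub _) ho0)
      have hU'int : Integrable (fun ω => u' (X i ω)) P := hW_int.congr hU'W
      have hVbound : ∀ ω, ‖((N:ℝ)-1)/((N:ℝ) * ∑ j ∈ Finset.univ.erase i, h (X j ω))‖
          ≤ ((N:ℝ)-1)/((N:ℝ) * (((N:ℝ)-1) * (m / E))) := by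
        intro ω
        have hden : (0:ℝ) < (N:ℝ) * (((N:ℝ)-1) * (m/E)) := by positivity
        have hden2 : (0:ℝ) < (N:ℝ) * ∑ j ∈ Finset.univ.erase i, h (X j ω) := by
          have := hTpos ω
          positivity
        rw [Real.norm_eq_abs, abs_of_nonneg (div_nonneg hN1.le hden2.le)]
        apply div_le_div_of_nonneg_left hN1.le hden
        exact mul_le_mul_of_nonneg_left (hTlb ω) (by positivity)
      have hVa : AEStronglyMeasurable
          (fun ω => ((N:ℝ)-1)/((N:ℝ) * ∑ j ∈ Finset.univ.erase i, h (X j ω))) P :=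
        hdiv _ _ aestronglyMeasurable_const
          ((Finset.aestronglyMeasurable_fun_sum _ (fun j _ => hYa j)).const_mul _)
      have hV_int : Integrable
          (fun ω => ((N:ℝ)-1)/((N:ℝ) * ∑ j ∈ Finset.univ.erase i, h (X j ω))) P :=
        Integrable.mono' (integrable_const _) hVa (Filter.Eventually.of_forall hVbound)
      have hV'int : Integrable
          (fun ω => ((N:ℝ)-1)/((N:ℝ) * ∑ j ∈ Finset.univ.erase i, h' (X j ω))) P :=
        hV_int.congr hVae
      -- the zero term
      have hU'0 : ∫ ω, u' (X i ω) ∂P = 0 := by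
        have h1 : ∫ x, u' x ∂(Measure.map (X i) P) = ∫ ω, u' (X i ω) ∂P :=
          integral_map (hXmeas i).aemeasurable hu'meas.aestronglyMeasurable
        rw [← h1, hlaw i, integral_congr_ae hu'ae.symm, hu0]
      have hzero : ∫ ω, (g (X i ω) - c * h (X i ω))
          * (((N:ℝ)-1)/((N:ℝ) * ∑ j ∈ Finset.univ.erase i, h (X j ω))) ∂P = 0 := by
        have he : (fun ω => (g (X i ω) - c * h (X i ω))
            * (((N:ℝ)-1)/((N:ℝ) * ∑ j ∈ Finset.univ.erase i, h (X j ω))))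
            =ᵐ[P] (fun ω => u' (X i ω))
              * (fun ω => ((N:ℝ)-1)/((N:ℝ) * ∑ j ∈ Finset.univ.erase i, h' (X j ω))) := by
          filter_upwards [hU'W, hVae] with ω h1 h2
          simp only [Pi.mul_apply]
          rw [h1, h2]
        rw [integral_congr_ae he, IndepFun.integral_mul_eq_mul_integral (IndepFun.symm hcomp2) hU'int.1 hV'int.1,
          hU'0, zero_mul]
      -- split and estimate
      have hWV_int : Integrable (fun ω => (g (X i ω) - c * h (X i ω))
          * (((N:ℝ)-1)/((N:ℝ) * ∑ j ∈ Finset.univ.erase i, h (X j ω)))) P := by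
        refine Integrable.mono'
          (integrable_const ((o * (E * m)) * (((N:ℝ)-1)/((N:ℝ) * (((N:ℝ)-1) * (m / E))))))
          ((hWa i).mul hVa) (Filter.Eventually.of_forall fun ω => ?_)
        rw [Real.norm_eq_abs, abs_mul]
        have h1 : |g (X i ω) - c * h (X i ω)| ≤ o * (E * m) :=
          le_trans (hWb _) (mul_le_mul_of_nonneg_left (hub _) ho0)
        have h2 := hVbound ω
        rw [Real.norm_eq_abs] at h2
        exact mul_le_mul h1 h2 (abs_nonneg _) (by positivity)
      have hsplit : ∫ ω, (g (X i ω) - c * h (X i ω)) / (∑ j, h (X j ω)) ∂P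
          = ∫ ω, ((g (X i ω) - c * h (X i ω)) / (∑ j, h (X j ω))
            - (g (X i ω) - c * h (X i ω))
              * (((N:ℝ)-1)/((N:ℝ) * ∑ j ∈ Finset.univ.erase i, h (X j ω)))) ∂P := by
        rw [integral_sub (hWS_int i) hWV_int, hzero, sub_zero]
      rw [hsplit]
      calc |∫ ω, ((g (X i ω) - c * h (X i ω)) / (∑ j, h (X j ω))
            - (g (X i ω) - c * h (X i ω))
              * (((N:ℝ)-1)/((N:ℝ) * ∑ j ∈ Finset.univ.erase i, h (X j ω)))) ∂P|
          ≤ ∫ ω, |(g (X i ω) - c * h (X i ω)) / (∑ j, h (X j ω))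
            - (g (X i ω) - c * h (X i ω))
              * (((N:ℝ)-1)/((N:ℝ) * ∑ j ∈ Finset.univ.erase i, h (X j ω)))| ∂P := by
            simpa only [Real.norm_eq_abs] using norm_integral_le_integral_norm
              (fun ω => (g (X i ω) - c * h (X i ω)) / (∑ j, h (X j ω))
                - (g (X i ω) - c * h (X i ω))
                  * (((N:ℝ)-1)/((N:ℝ) * ∑ j ∈ Finset.univ.erase i, h (X j ω)))) (μ := P)
        _ ≤ ∫ ω, (E - 1) * o / (N:ℝ) * (h (X i ω) / ∑ j, h (X j ω)) ∂P :=
            integral_mono ((hWS_int i).sub hWV_int).abs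
              ((hYS_int i).const_mul _) hptw
        _ = (E - 1) * o / (N:ℝ) * ∫ ω, h (X i ω) / (∑ j, h (X j ω)) ∂P :=
            integral_const_mul _ _
    · -- simple case
      rw [hCdef, if_neg h2]
      calc |∫ ω, (g (X i ω) - c * h (X i ω)) / (∑ j, h (X j ω)) ∂P|
          ≤ ∫ ω, |(g (X i ω) - c * h (X i ω)) / (∑ j, h (X j ω))| ∂P := by
            simpa only [Real.norm_eq_abs] using norm_integral_le_integral_norm
              (fun ω => (g (X i ω) - c * h (X i ω)) / (∑ j, h (X j ω))) (μ := P)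
        _ ≤ ∫ ω, o * (h (X i ω) / ∑ j, h (X j ω)) ∂P :=
            integral_mono (hWS_int i).abs ((hYS_int i).const_mul o) (hWS_bound i)
        _ = o * ∫ ω, h (X i ω) / (∑ j, h (X j ω)) ∂P := integral_const_mul _ _
  -- assembly
  have hfinal : |(∫ ω, (∑ i, g (X i ω)) / (∑ j, h (X j ω)) ∂P) - c| ≤ C := by
    rw [hsum]
    calc |∑ i, ∫ ω, (g (X i ω) - c * h (X i ω)) / (∑ j, h (X j ω)) ∂P|
        ≤ ∑ i, |∫ ω, (g (X i ω) - c * h (X i ω)) / (∑ j, h (X j ω)) ∂P| :=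
          Finset.abs_sum_le_sum_abs _ _
      _ ≤ ∑ i, C * ∫ ω, h (X i ω) / (∑ j, h (X j ω)) ∂P :=
          Finset.sum_le_sum (fun i _ => key i)
      _ = C := by rw [← Finset.mul_sum, hone, mul_one]
  have hNC : (N : ℝ) * C ≤ E * o := by
    by_cases h2 : 2 ≤ N
    · rw [hCdef, if_pos h2]
      have hN0 : (N : ℝ) ≠ 0 := by positivity
      rw [mul_div_assoc', mul_comm, mul_div_assoc, div_self hN0, mul_one]
      nlinarith
    · have hN1 : N = 1 := by omega
      rw [hCdef, if_neg h2, hN1]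
      push_cast
      nlinarith
  calc (N : ℝ) * |(∫ ω, (∑ i, g (X i ω)) / (∑ j, h (X j ω)) ∂P) - c|
      ≤ (N : ℝ) * C := by
        exact mul_le_mul_of_nonneg_left hfinal (by positivity)
    _ ≤ E * o := hNC
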